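/- Let x₀ > 0, let q : [0,x₀] → ℝ be nonnegative, continuous and monotone increasing, and let z > 0 satisfy z² > q(x₀). Let φ be the Prüfer angle of q at z, let i ≥ 0 be an integer, D ∈ [π/2, π], and let a ≤ b in (0,x₀] satisfy φ(a) = iπ + π/2 and φ(b) = iπ + π/2 + D; let ψ denote the inverse of φ restricted to [a,b] and set Q(t) = q(ψ(t + (i+1)π))/z², and A = q(a)/z². Then ∫_{−π/2}^{−π/2+D} Q(t)·(sin²t − t·sin t·cos t)/(1 − Q(t)·sin²t) dt ≥ (π/4)·A/(1 − (3/4)·A) + (π/4)·log(1 − A) − (π/6)·log(1 − (3/4)·A). -/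

import Mathlib

open Real Set
open MeasureTheory intervalIntegral

-- sin t - t cos t ≥ 0 on [0, π/2]
lemma SILB_sin_sub_cos {t : ℝ} (h0 : 0 ≤ t) (h1 : t ≤ π / 2) :
    0 ≤ Real.sin t - t * Real.cos t := by
  rcases eq_or_lt_of_le h0 with rfl | h0'
  · simp
  rcases eq_or_lt_of_le h1 with rfl | h1'
  · simp
  have hc : 0 < Real.cos t := Real.cos_pos_of_mem_Ioo ⟨by linarith [Real.pi_pos], h1'⟩
  have ht : t < Real.tan t := Real.lt_tan h0' h1'
  have : Real.sin t = Real.tan t * Real.cos t := by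
    rw [Real.tan_eq_sin_div_cos]; field_simp
  rw [this]
  nlinarith

-- g nonneg on [-π/2, π/2]
lemma SILB_g_nonneg {t : ℝ} (h0 : -(π/2) ≤ t) (h1 : t ≤ π / 2) :
    0 ≤ Real.sin t ^ 2 - t * Real.sin t * Real.cos t := by
  have key : ∀ s : ℝ, 0 ≤ s → s ≤ π / 2 →
      0 ≤ Real.sin s ^ 2 - s * Real.sin s * Real.cos s := by
    intro s hs0 hs1
    have h2 := SILB_sin_sub_cos hs0 hs1
    have h3 : 0 ≤ Real.sin s := Real.sin_nonneg_of_nonneg_of_le_pi hs0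
      (by linarith [Real.pi_pos])
    nlinarith
  rcases le_or_gt 0 t with h | h
  · exact key t h h1
  · have := key (-t) (by linarith) (by linarith)
    simp only [Real.sin_neg, Real.cos_neg] at this
    nlinarith [this]

lemma SILB_hasSum_aux {x : ℝ} (h0 : 0 ≤ x) (h1 : x < 1) :
    HasSum (fun n : ℕ => (1 + 1 / (2 * ((n : ℝ) + 1))) * x ^ (n + 1))
      (x / (1 - x) - 1 / 2 * Real.log (1 - x)) := by
  have hg : HasSum (fun n : ℕ => x ^ (n + 1)) (x / (1 - x)) := by
    have := (hasSum_geometric_of_lt_one h0 h1).mul_left x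
    have heq : (fun n : ℕ => x * x ^ n) = fun n : ℕ => x ^ (n + 1) := by
      funext n; rw [pow_succ]; ring
    rw [heq] at this
    simpa [div_eq_mul_inv] using this
  have hl : HasSum (fun n : ℕ => x ^ (n + 1) / ((n : ℝ) + 1)) (-Real.log (1 - x)) := by
    have habs : |x| < 1 := by rw [abs_of_nonneg h0]; exact h1
    exact_mod_cast Real.hasSum_pow_div_log_of_abs_lt_one habs
  have := hg.add (hl.mul_left (1 / 2))
  convert this using 1
  · funext n; field_simp
  · ring

noncomputable def SILB_T (n : ℕ) : ℝ := ∫ t in (0:ℝ)..(π/2), Real.sin t ^ (2 * n)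

lemma SILB_T_nonneg (n : ℕ) : 0 ≤ SILB_T n := by
  apply intervalIntegral.integral_nonneg (by linarith [Real.pi_pos])
  intro u _; exact (even_two_mul n).pow_nonneg _

lemma SILB_T_succ (n : ℕ) :
    SILB_T (n + 1) = (2 * (n : ℝ) + 1) / (2 * n + 2) * SILB_T n := by
  have h : 2 * (n + 1) = 2 * n + 2 := by ring
  rw [SILB_T, h, integral_sin_pow]
  simp [Real.cos_pi_div_two, SILB_T]

lemma SILB_T_bound (n : ℕ) : π / 3 * (3 / 4) ^ (n + 1) ≤ SILB_T (n + 1) := by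
  induction n with
  | zero =>
    have h1 : SILB_T 1 = π / 4 := by
      rw [SILB_T]
      norm_num
      ring
    rw [h1, pow_one]; linarith [Real.pi_pos]
  | succ m ih =>
    rw [SILB_T_succ]
    have hc : (3:ℝ) / 4 ≤ (2 * ((m:ℝ)+1) + 1) / (2 * ((m:ℝ)+1) + 2) := by
      rw [div_le_div_iff₀ (by norm_num) (by positivity)]
      push_cast; nlinarith [Nat.cast_nonneg (α := ℝ) m]
    calc π / 3 * (3 / 4) ^ (m + 2) = 3 / 4 * (π / 3 * (3 / 4) ^ (m + 1)) := by ring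
    _ ≤ 3 / 4 * SILB_T (m + 1) := by nlinarith [SILB_T_nonneg (m+1)]
    _ ≤ (2 * ((m:ℝ)+1) + 1) / (2 * ((m:ℝ)+1) + 2) * SILB_T (m + 1) := by
        exact mul_le_mul_of_nonneg_right hc (SILB_T_nonneg (m+1))
    _ = (2 * ((m+1:ℕ):ℝ) + 1) / (2 * ((m+1:ℕ):ℝ) + 2) * SILB_T (m + 1) := by push_cast; ring

lemma SILB_integral_H {A : ℝ} (h0 : 0 ≤ A) (h1 : A < 1) :
    π / 4 * (A / (1 - 3 / 4 * A)) - π / 6 * Real.log (1 - 3 / 4 * A) ≤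
      ∫ t in (0:ℝ)..(π/2),
        (A * Real.sin t ^ 2 / (1 - A * Real.sin t ^ 2)
          - 1 / 2 * Real.log (1 - A * Real.sin t ^ 2)) := by
  have hpi := Real.pi_pos
  set μ : Measure ℝ := volume.restrict (Ioc (0:ℝ) (π/2)) with hμ
  set F : ℕ → ℝ → ℝ :=
    fun n t => (1 + 1 / (2 * ((n : ℝ) + 1))) * (A * Real.sin t ^ 2) ^ (n + 1) with hF
  have hx : ∀ t : ℝ, 0 ≤ A * Real.sin t ^ 2 ∧ A * Real.sin t ^ 2 ≤ A := by
    intro t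
    constructor
    · positivity
    · nlinarith [Real.sin_sq_le_one t]
  have hxlt : ∀ t : ℝ, A * Real.sin t ^ 2 < 1 := fun t => lt_of_le_of_lt (hx t).2 h1
  have hcoef : ∀ n : ℕ, (0:ℝ) ≤ 1 + 1 / (2 * ((n : ℝ) + 1)) ∧
      (1 + 1 / (2 * ((n : ℝ) + 1))) ≤ 2 := by
    intro n
    have hn : (0:ℝ) < 2 * ((n : ℝ) + 1) := by positivity
    constructor
    · positivity
    · have : 1 / (2 * ((n : ℝ) + 1)) ≤ 1 := by
        rw [div_le_one hn]; nlinarith [Nat.cast_nonneg (α := ℝ) n]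
      linarith
  -- pointwise sum
  have hptsum : ∀ t : ℝ, HasSum (fun n => F n t)
      (A * Real.sin t ^ 2 / (1 - A * Real.sin t ^ 2)
        - 1 / 2 * Real.log (1 - A * Real.sin t ^ 2)) := by
    intro t
    exact SILB_hasSum_aux (hx t).1 (hxlt t)
  -- integrability
  have hFcont : ∀ n : ℕ, Continuous (F n) := by
    intro n; rw [hF]; continuity
  have hFint : ∀ n : ℕ, Integrable (F n) μ := by
    intro n
    exact (hFcont n).integrableOn_Ioc
  have hFnonneg : ∀ n t, 0 ≤ F n t := by
    intro n t
    have := (hcoef n).1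
    have := (hx t).1
    positivity
  have hFbound : ∀ n t, F n t ≤ 2 * A ^ (n + 1) := by
    intro n t
    have h2 := (hcoef n).2
    have h3 : (A * Real.sin t ^ 2) ^ (n + 1) ≤ A ^ (n + 1) :=
      pow_le_pow_left₀ (hx t).1 (hx t).2 _
    have h4 : (0:ℝ) ≤ (A * Real.sin t ^ 2) ^ (n + 1) := pow_nonneg (hx t).1 _
    calc F n t ≤ 2 * (A * Real.sin t ^ 2) ^ (n + 1) :=
          mul_le_mul_of_nonneg_right h2 h4
    _ ≤ 2 * A ^ (n + 1) := by linarith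
  have hnormint : ∀ n : ℕ, (∫ t, ‖F n t‖ ∂μ) ≤ π / 2 * (2 * A ^ (n + 1)) := by
    intro n
    have : ∀ t, ‖F n t‖ = F n t := fun t => Real.norm_of_nonneg (hFnonneg n t)
    simp_rw [this]
    have hconst : Integrable (fun _ : ℝ => 2 * A ^ (n + 1)) μ :=
      integrable_const _
    calc (∫ t, F n t ∂μ) ≤ ∫ _t, 2 * A ^ (n + 1) ∂μ :=
        integral_mono (hFint n) hconst (fun t => hFbound n t)
    _ = π / 2 * (2 * A ^ (n + 1)) := by
        rw [hμ, MeasureTheory.setIntegral_const, Real.volume_real_Ioc_of_le (by linarith), smul_eq_mul]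
        ring
  have hnorm_nonneg : ∀ n : ℕ, 0 ≤ (∫ t, ‖F n t‖ ∂μ) :=
    fun n => integral_nonneg (fun t => norm_nonneg _)
  have hsummable : Summable (fun n : ℕ => ∫ t, ‖F n t‖ ∂μ) := by
    apply Summable.of_nonneg_of_le hnorm_nonneg hnormint
    have : Summable (fun n : ℕ => A ^ (n+1)) := by
      have hs := summable_geometric_of_lt_one h0 h1
      exact_mod_cast hs.comp_injective (add_left_injective 1)
    exact (this.mul_left 2).mul_left (π/2)
  have hswap := MeasureTheory.hasSum_integral_of_summable_integral_norm hFint hsummable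
  -- identify the infinite sum under the integral
  have htsum_eq : (fun t => ∑' n, F n t) =
      fun t => (A * Real.sin t ^ 2 / (1 - A * Real.sin t ^ 2)
        - 1 / 2 * Real.log (1 - A * Real.sin t ^ 2)) := by
    funext t; exact (hptsum t).tsum_eq
  rw [htsum_eq] at hswap
  -- each term integral
  have hterm : ∀ n : ℕ, (∫ t, F n t ∂μ) =
      (1 + 1 / (2 * ((n : ℝ) + 1))) * A ^ (n + 1) * SILB_T (n + 1) := by
    intro n
    have hpow : ∀ t : ℝ, F n t =
        ((1 + 1 / (2 * ((n : ℝ) + 1))) * A ^ (n + 1)) * Real.sin t ^ (2 * (n + 1)) := by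
      intro t
      simp only [hF]
      rw [mul_pow, ← pow_mul]
      ring
    simp_rw [hpow]
    rw [MeasureTheory.integral_const_mul]
    congr 1
    rw [SILB_T, intervalIntegral.integral_of_le (by linarith)]
  -- target sum
  have htarget := (SILB_hasSum_aux (x := 3/4 * A) (by linarith) (by linarith)).mul_left (π/3)
  -- term comparison
  have hle : ∀ n : ℕ, π/3 * ((1 + 1 / (2 * ((n : ℝ) + 1))) * (3/4 * A) ^ (n + 1)) ≤
      (∫ t, F n t ∂μ) := by
    intro n
    rw [hterm n]
    have hT := SILB_T_bound n
    have hc := (hcoef n).1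
    have hA : (0:ℝ) ≤ A ^ (n+1) := pow_nonneg h0 _
    have hpow : (3/4 * A) ^ (n + 1) = (3/4:ℝ) ^ (n+1) * A ^ (n+1) := mul_pow _ _ _
    rw [hpow]
    calc π/3 * ((1 + 1 / (2 * ((n : ℝ) + 1))) * ((3/4:ℝ) ^ (n+1) * A ^ (n+1)))
        = ((1 + 1 / (2 * ((n : ℝ) + 1))) * A ^ (n+1)) * (π/3 * (3/4:ℝ) ^ (n+1)) := by ring
    _ ≤ ((1 + 1 / (2 * ((n : ℝ) + 1))) * A ^ (n+1)) * SILB_T (n+1) := by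
        apply mul_le_mul_of_nonneg_left hT (by positivity)
    _ = (1 + 1 / (2 * ((n : ℝ) + 1))) * A ^ (n+1) * SILB_T (n+1) := by ring
  have hfinal := hasSum_le hle htarget hswap
  -- now rewrite both sides
  have hIoc : (∫ t, (A * Real.sin t ^ 2 / (1 - A * Real.sin t ^ 2)
        - 1 / 2 * Real.log (1 - A * Real.sin t ^ 2)) ∂μ) =
      ∫ t in (0:ℝ)..(π/2),
        (A * Real.sin t ^ 2 / (1 - A * Real.sin t ^ 2)
          - 1 / 2 * Real.log (1 - A * Real.sin t ^ 2)) := by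
    rw [intervalIntegral.integral_of_le (by linarith)]
  rw [hIoc] at hfinal
  have harg : 1 - 3/4 * A = 1 - 3 / 4 * A := rfl
  calc π / 4 * (A / (1 - 3 / 4 * A)) - π / 6 * Real.log (1 - 3 / 4 * A)
      = π/3 * ((3/4 * A) / (1 - 3/4 * A) - 1/2 * Real.log (1 - 3/4 * A)) := by ring
  _ ≤ _ := hfinal

lemma SILB_core {A : ℝ} (h0 : 0 ≤ A) (h1 : A < 1) :
    π / 4 * (A / (1 - 3 / 4 * A)) + π / 4 * Real.log (1 - A)
        - π / 6 * Real.log (1 - 3 / 4 * A) ≤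
      ∫ t in (-(π/2))..(0:ℝ),
        A * (Real.sin t ^ 2 - t * Real.sin t * Real.cos t)
          / (1 - A * Real.sin t ^ 2) := by
  have hpi := Real.pi_pos
  have hden : ∀ t : ℝ, 0 < 1 - A * Real.sin t ^ 2 := by
    intro t
    nlinarith [Real.sin_sq_le_one t, sq_nonneg (Real.sin t)]
  set H : ℝ → ℝ := fun t => A * Real.sin t ^ 2 / (1 - A * Real.sin t ^ 2)
      - 1 / 2 * Real.log (1 - A * Real.sin t ^ 2) with hH
  set w : ℝ → ℝ := fun t => t / 2 * Real.log (1 - A * Real.sin t ^ 2) with hw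
  set w' : ℝ → ℝ := fun t => 1 / 2 * Real.log (1 - A * Real.sin t ^ 2)
      - t * (A * Real.sin t * Real.cos t) / (1 - A * Real.sin t ^ 2) with hw'
  have hwderiv : ∀ t : ℝ, HasDerivAt w (w' t) t := by
    intro t
    have hinner : HasDerivAt (fun t : ℝ => 1 - A * Real.sin t ^ 2)
        (-(A * (2 * Real.sin t ^ 1 * Real.cos t))) t := by
      have h := ((Real.hasDerivAt_sin t).pow 2).const_mul A
      simpa using (h.const_sub 1)
    have hlog : HasDerivAt (fun t : ℝ => Real.log (1 - A * Real.sin t ^ 2))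
        ((1 - A * Real.sin t ^ 2)⁻¹ * (-(A * (2 * Real.sin t ^ 1 * Real.cos t)))) t := by
      exact (Real.hasDerivAt_log (hden t).ne').comp t hinner
    have hid : HasDerivAt (fun t : ℝ => t / 2) (1 / 2) t := by
      simpa using (hasDerivAt_id t).div_const 2
    have := hid.mul hlog
    refine this.congr_deriv ?_
    rw [hw', pow_one]
    ring
  have hc1 : Continuous fun t : ℝ => 1 - A * Real.sin t ^ 2 := by continuity
  have hclog : Continuous fun t : ℝ => Real.log (1 - A * Real.sin t ^ 2) :=
    hc1.log (fun t => (hden t).ne')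
  have hw'cont : Continuous w' := by
    rw [hw']
    exact (continuous_const.mul hclog).sub
      (Continuous.div (by continuity) hc1 (fun t => (hden t).ne'))
  have hHcont : Continuous H := by
    rw [hH]
    exact (Continuous.div (by continuity) hc1 (fun t => (hden t).ne')).sub
      (continuous_const.mul hclog)
  have hsplit : ∀ t : ℝ,
      A * (Real.sin t ^ 2 - t * Real.sin t * Real.cos t) / (1 - A * Real.sin t ^ 2)
        = H t + w' t := by
    intro t
    rw [hH, hw']
    have hne : (1 - A * Real.sin t ^ 2) ≠ 0 := (hden t).ne'
    field_simp
    ring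
  rw [intervalIntegral.integral_congr (g := fun t => H t + w' t)
    (fun t _ => hsplit t)]
  rw [intervalIntegral.integral_add (hHcont.intervalIntegrable _ _)
    (hw'cont.intervalIntegrable _ _)]
  have hFTC : (∫ t in (-(π/2))..(0:ℝ), w' t) = w 0 - w (-(π/2)) :=
    intervalIntegral.integral_eq_sub_of_hasDerivAt (fun t _ => hwderiv t)
      (hw'cont.intervalIntegrable _ _)
  have hw0 : w 0 = 0 := by rw [hw]; simp
  have hwpi : w (-(π/2)) = -(π/4) * Real.log (1 - A) := by
    rw [hw]; simp [Real.sin_neg, Real.sin_pi_div_two]; ring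
  have hHeven : (∫ t in (-(π/2))..(0:ℝ), H t) = ∫ t in (0:ℝ)..(π/2), H t := by
    have h1' := intervalIntegral.integral_comp_neg (a := (0:ℝ)) (b := π/2)
      (fun t => H t)
    have h2 : (fun x : ℝ => H (-x)) = H := by
      funext x; rw [hH]; simp [Real.sin_neg]
    rw [h2, show -(0:ℝ) = 0 by norm_num] at h1'
    exact h1'.symm
  have hmain := SILB_integral_H h0 h1
  rw [← hH] at hmain
  rw [hHeven, hFTC, hw0, hwpi]
  linarith

lemma SILB_compare (A M D : ℝ) (P : ℝ → ℝ) (hA0 : 0 ≤ A) (hM1 : M < 1)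
    (hD1 : π / 2 ≤ D) (hD2 : D ≤ π)
    (hPmono : MonotoneOn P (Icc (-(π/2)) (-(π/2) + D)))
    (hPb : ∀ t ∈ Icc (-(π/2)) (-(π/2) + D), A ≤ P t ∧ P t ≤ M) :
    π / 4 * (A / (1 - 3 / 4 * A)) + π / 4 * Real.log (1 - A)
        - π / 6 * Real.log (1 - 3 / 4 * A) ≤
      ∫ t in (-(π/2))..(-(π/2) + D),
        P t * (Real.sin t ^ 2 - t * Real.sin t * Real.cos t)
          / (1 - P t * Real.sin t ^ 2) := by
  have hpi := Real.pi_pos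
  have hle : -(π/2) ≤ -(π/2) + D := by linarith
  have hmem0 : -(π/2) ∈ Icc (-(π/2)) (-(π/2) + D) := ⟨le_refl _, hle⟩
  have hA1 : A < 1 := lt_of_le_of_lt (le_trans (hPb _ hmem0).1 (hPb _ hmem0).2) hM1
  have hM0 : 0 ≤ M := le_trans (le_trans hA0 (hPb _ hmem0).1) (hPb _ hmem0).2
  have hsub : Icc (-(π/2)) (-(π/2) + D) ⊆ Icc (-(π/2)) (π/2) := by
    apply Icc_subset_Icc (le_refl _) (by linarith)
  have hdenA : ∀ t : ℝ, 0 < 1 - A * Real.sin t ^ 2 := by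
    intro t; nlinarith [Real.sin_sq_le_one t, sq_nonneg (Real.sin t)]
  -- lower function
  have hlow_cont : Continuous (fun t : ℝ =>
      A * (Real.sin t ^ 2 - t * Real.sin t * Real.cos t)
        / (1 - A * Real.sin t ^ 2)) := by
    exact Continuous.div (by fun_prop) (by continuity) (fun t => (hdenA t).ne')
  -- integrability of the upper function
  have hPii : IntervalIntegrable P volume (-(π/2)) (-(π/2) + D) :=
    MonotoneOn.intervalIntegrable (by rwa [uIcc_of_le hle])
  have hPint : IntegrableOn P (Ioc (-(π/2)) (-(π/2) + D)) volume :=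
    (intervalIntegrable_iff_integrableOn_Ioc_of_le hle).1 hPii
  have hPmeas : AEStronglyMeasurable P
      (volume.restrict (Ioc (-(π/2)) (-(π/2) + D))) := hPint.aestronglyMeasurable
  have hFint : IntervalIntegrable (fun t => P t *
      (Real.sin t ^ 2 - t * Real.sin t * Real.cos t)
        / (1 - P t * Real.sin t ^ 2)) volume (-(π/2)) (-(π/2) + D) := by
    rw [intervalIntegrable_iff_integrableOn_Ioc_of_le hle]
    have hcG : Continuous (fun t : ℝ => Real.sin t ^ 2 - t * Real.sin t * Real.cos t) := by
      fun_prop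
    have hcS : Continuous (fun t : ℝ => Real.sin t ^ 2) := by fun_prop
    constructor
    · have hnum : AEStronglyMeasurable
          (fun t => P t * (Real.sin t ^ 2 - t * Real.sin t * Real.cos t))
          (volume.restrict (Ioc (-(π/2)) (-(π/2) + D))) :=
        hPmeas.mul hcG.aestronglyMeasurable
      have hden : AEStronglyMeasurable
          (fun t => (1 - P t * Real.sin t ^ 2)⁻¹)
          (volume.restrict (Ioc (-(π/2)) (-(π/2) + D))) :=
        ((aemeasurable_const.sub (hPmeas.aemeasurable.mul
          hcS.measurable.aemeasurable)).inv).aestronglyMeasurable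
      have := hnum.mul hden
      simpa [div_eq_mul_inv, Pi.mul_def] using this
    · apply MeasureTheory.HasFiniteIntegral.restrict_of_bounded
        (C := M * (1 + π) / (1 - M)) measure_Ioc_lt_top
      filter_upwards [MeasureTheory.ae_restrict_mem measurableSet_Ioc] with t ht
      have htI : t ∈ Icc (-(π/2)) (-(π/2) + D) := Ioc_subset_Icc_self ht
      obtain ⟨hPA, hPM⟩ := hPb t htI
      have hP0 : 0 ≤ P t := le_trans hA0 hPA
      have htabs : |t| ≤ π / 2 := by
        rw [abs_le]
        exact ⟨(hsub htI).1, (hsub htI).2⟩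
      have hs1 : |Real.sin t| ≤ 1 := Real.abs_sin_le_one t
      have hc1 : |Real.cos t| ≤ 1 := Real.abs_cos_le_one t
      have hG : |Real.sin t ^ 2 - t * Real.sin t * Real.cos t| ≤ 1 + π := by
        have h1 : |Real.sin t ^ 2| ≤ 1 := by
          rw [abs_of_nonneg (sq_nonneg _)]
          exact Real.sin_sq_le_one t
        have h2 : |t * Real.sin t * Real.cos t| ≤ π / 2 := by
          rw [abs_mul, abs_mul]
          calc |t| * |Real.sin t| * |Real.cos t| ≤ (π/2) * 1 * 1 := by
                apply mul_le_mul (mul_le_mul htabs hs1 (abs_nonneg _)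
                  (by linarith)) hc1 (abs_nonneg _) (by positivity)
          _ = π / 2 := by ring
        calc |Real.sin t ^ 2 - t * Real.sin t * Real.cos t|
            ≤ |Real.sin t ^ 2| + |t * Real.sin t * Real.cos t| := abs_sub _ _
        _ ≤ 1 + π := by linarith
      have hdenP : 1 - M ≤ 1 - P t * Real.sin t ^ 2 := by
        nlinarith [Real.sin_sq_le_one t, sq_nonneg (Real.sin t)]
      have hdenPpos : 0 < 1 - P t * Real.sin t ^ 2 := by linarith
      have hnum : |P t * (Real.sin t ^ 2 - t * Real.sin t * Real.cos t)| ≤ M * (1 + π) := by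
        rw [abs_mul]
        apply mul_le_mul _ hG (abs_nonneg _) hM0
        rw [abs_of_nonneg hP0]; exact hPM
      rw [Real.norm_eq_abs, abs_div, abs_of_pos hdenPpos]
      exact div_le_div₀ (by positivity) hnum (by linarith) hdenP
  -- pointwise comparison
  have hpt : ∀ t ∈ Icc (-(π/2)) (-(π/2) + D),
      A * (Real.sin t ^ 2 - t * Real.sin t * Real.cos t) / (1 - A * Real.sin t ^ 2)
        ≤ P t * (Real.sin t ^ 2 - t * Real.sin t * Real.cos t)
            / (1 - P t * Real.sin t ^ 2) := by
    intro t htI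
    obtain ⟨hPA, hPM⟩ := hPb t htI
    have hP0 : 0 ≤ P t := le_trans hA0 hPA
    have hG : 0 ≤ Real.sin t ^ 2 - t * Real.sin t * Real.cos t :=
      SILB_g_nonneg (hsub htI).1 (hsub htI).2
    have hdenPpos : 0 < 1 - P t * Real.sin t ^ 2 := by
      nlinarith [Real.sin_sq_le_one t, sq_nonneg (Real.sin t)]
    rw [div_le_div_iff₀ (hdenA t) hdenPpos]
    nlinarith [mul_nonneg (mul_nonneg hG (sub_nonneg.2 hPA)) (sq_nonneg (Real.sin t))]
  have hmono_int := intervalIntegral.integral_mono_on hle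
    (hlow_cont.intervalIntegrable _ _) hFint hpt
  -- splitting the lower integral
  have hsplit : (∫ t in (-(π/2))..(0:ℝ),
      A * (Real.sin t ^ 2 - t * Real.sin t * Real.cos t) / (1 - A * Real.sin t ^ 2))
      + (∫ t in (0:ℝ)..(-(π/2) + D),
      A * (Real.sin t ^ 2 - t * Real.sin t * Real.cos t) / (1 - A * Real.sin t ^ 2))
      = ∫ t in (-(π/2))..(-(π/2) + D),
      A * (Real.sin t ^ 2 - t * Real.sin t * Real.cos t) / (1 - A * Real.sin t ^ 2) :=
    intervalIntegral.integral_add_adjacent_intervals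
      (hlow_cont.intervalIntegrable _ _) (hlow_cont.intervalIntegrable _ _)
  have hnn : 0 ≤ ∫ t in (0:ℝ)..(-(π/2) + D),
      A * (Real.sin t ^ 2 - t * Real.sin t * Real.cos t) / (1 - A * Real.sin t ^ 2) := by
    apply intervalIntegral.integral_nonneg (by linarith)
    intro u hu
    have hG : 0 ≤ Real.sin u ^ 2 - u * Real.sin u * Real.cos u :=
      SILB_g_nonneg (by linarith [hu.1]) (by linarith [hu.2])
    have := hdenA u
    positivity
  have hcore := SILB_core hA0 hA1
  linarith

/-- Lemma 3.4 ii): lower bound for the substituted integrand with the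
monotone factor sin²t − t·sin t·cos t. -/
theorem substituted_integral_lower_bound
    (x₀ : ℝ) (hx₀ : 0 < x₀)
    (q : ℝ → ℝ) (hqc : ContinuousOn q (Icc 0 x₀))
    (hqnonneg : ∀ x ∈ Icc 0 x₀, 0 ≤ q x)
    (hmono : MonotoneOn q (Icc 0 x₀))
    (z : ℝ) (hz : 0 < z) (hsup : q x₀ < z ^ 2)
    (φ : ℝ → ℝ) (hφ0 : φ 0 = 0)
    (hφODE : ∀ x ∈ Icc 0 x₀, HasDerivAt φ (z - q x / z * Real.sin (φ x) ^ 2) x)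
    (i : ℕ) (D : ℝ) (hD : D ∈ Icc (π / 2) π)
    (a b : ℝ) (ha : a ∈ Ioc 0 x₀) (hb : b ∈ Ioc 0 x₀) (hab : a ≤ b)
    (hφa : φ a = i * π + π / 2) (hφb : φ b = i * π + π / 2 + D)
    (ψ : ℝ → ℝ)
    (hψ : ∀ t ∈ Icc (φ a) (φ b), ψ t ∈ Icc a b ∧ φ (ψ t) = t) :
    (∫ t in (-(π / 2))..(-(π / 2) + D),
        (q (ψ (t + ((i : ℝ) + 1) * π)) / z ^ 2) *
          (Real.sin t ^ 2 - t * Real.sin t * Real.cos t) /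
          (1 - (q (ψ (t + ((i : ℝ) + 1) * π)) / z ^ 2) * Real.sin t ^ 2)) ≥
      π / 4 * ((q a / z ^ 2) / (1 - 3 / 4 * (q a / z ^ 2)))
        + π / 4 * Real.log (1 - q a / z ^ 2)
        - π / 6 * Real.log (1 - 3 / 4 * (q a / z ^ 2)) := by
  have hpi := Real.pi_pos
  obtain ⟨hD1, hD2⟩ := hD
  obtain ⟨ha0, hax⟩ := ha
  obtain ⟨hb0, hbx⟩ := hb
  have hz2 : (0:ℝ) < z ^ 2 := by positivity
  have haI : a ∈ Icc (0:ℝ) x₀ := ⟨ha0.le, hax⟩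
  have hbI : b ∈ Icc (0:ℝ) x₀ := ⟨hb0.le, hbx⟩
  have hxI : x₀ ∈ Icc (0:ℝ) x₀ := ⟨hx₀.le, le_refl _⟩
  have hqa0 : 0 ≤ q a := hqnonneg a haI
  have hqax : q a ≤ q x₀ := hmono haI hxI hax
  have hqbx : q b ≤ q x₀ := hmono hbI hxI hbx
  have hA0 : 0 ≤ q a / z ^ 2 := by positivity
  have hM1 : q x₀ / z ^ 2 < 1 := by rw [div_lt_one hz2]; exact hsup
  have hφmono : StrictMonoOn φ (Icc 0 x₀) := by
    apply strictMonoOn_of_deriv_pos (convex_Icc _ _)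
    · intro x hx
      exact (hφODE x hx).continuousAt.continuousWithinAt
    · intro x hx
      rw [interior_Icc] at hx
      have hxI' : x ∈ Icc (0:ℝ) x₀ := ⟨hx.1.le, hx.2.le⟩
      rw [(hφODE x hxI').deriv]
      have h1 : 0 ≤ q x := hqnonneg x hxI'
      have h2 : q x ≤ q x₀ := hmono hxI' hxI hx.2.le
      have h3 := Real.sin_sq_le_one (φ x)
      have h4 := sq_nonneg (Real.sin (φ x))
      have h5 : q x / z * Real.sin (φ x) ^ 2 < z := by
        rw [div_mul_eq_mul_div, div_lt_iff₀ hz]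
        nlinarith
      linarith
  have hexp : ((i:ℝ) + 1) * π = (i:ℝ) * π + π := by ring
  have hshift : ∀ t ∈ Icc (-(π/2)) (-(π/2) + D),
      t + ((i:ℝ) + 1) * π ∈ Icc (φ a) (φ b) := by
    intro t ht
    rw [hφa, hφb]
    obtain ⟨h1, h2⟩ := ht
    constructor
    · rw [hexp]; linarith
    · rw [hexp]; linarith
  have hψab : ∀ t ∈ Icc (-(π/2)) (-(π/2) + D),
      ψ (t + ((i:ℝ) + 1) * π) ∈ Icc a b := fun t ht => (hψ _ (hshift t ht)).1
  have hsubx : Icc a b ⊆ Icc (0:ℝ) x₀ := Icc_subset_Icc ha0.le hbx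
  rw [ge_iff_le]
  refine SILB_compare (q a / z ^ 2) (q x₀ / z ^ 2) D
      (fun t => q (ψ (t + ((i:ℝ) + 1) * π)) / z ^ 2) hA0 hM1 hD1 hD2 ?_ ?_
  · intro t1 h1 t2 h2 h12
    have hm1 := hψab t1 h1
    have hm2 := hψab t2 h2
    have hle : ψ (t1 + ((i:ℝ)+1) * π) ≤ ψ (t2 + ((i:ℝ)+1) * π) := by
      by_contra hcon
      push_neg at hcon
      have hlt := hφmono (hsubx hm2) (hsubx hm1) hcon
      rw [(hψ _ (hshift t1 h1)).2, (hψ _ (hshift t2 h2)).2] at hlt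
      linarith
    have hq : q (ψ (t1 + ((i:ℝ)+1) * π)) ≤ q (ψ (t2 + ((i:ℝ)+1) * π)) :=
      hmono (hsubx hm1) (hsubx hm2) hle
    exact div_le_div_of_nonneg_right hq hz2.le
  · intro t ht
    have hm := hψab t ht
    have hmI := hsubx hm
    have hq1 : q a ≤ q (ψ (t + ((i:ℝ)+1) * π)) := hmono haI hmI hm.1
    have hq2 : q (ψ (t + ((i:ℝ)+1) * π)) ≤ q b := hmono hmI hbI hm.2
    constructor
    · exact div_le_div_of_nonneg_right hq1 hz2.le
    · exact div_le_div_of_nonneg_right (le_trans hq2 hqbx) hz2.le
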